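/- For every d ≥ 3, the d-dragon D_d is a Vizing class 2 graph: its chromatic index equals d + 1, i.e., the chromatic number of the line graph L(D_d) equals d + 1. -/

import Mathlib

open SimpleGraph

/-- The edge relation of the `d`-dragon on vertex indices `0,…,d+1`:
vertices `0,…,d` are pairwise adjacent except `0` and `d`, and vertex `d+1`
is adjacent exactly to `0` and `d`. -/
def dragonRel (d : ℕ) (u v : ℕ) : Prop :=
  (u < d + 1 ∧ v < d + 1 ∧ ¬(u = 0 ∧ v = d) ∧ ¬(u = d ∧ v = 0)) ∨
  (u = d + 1 ∧ (v = 0 ∨ v = d))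

/-- The `d`-dragon `D_d`: the graph obtained from `K_{d+1}` by replacing one of its
edges by a path on 3 vertices. -/
def dragon (d : ℕ) : SimpleGraph (Fin (d + 2)) :=
  SimpleGraph.fromRel (fun u v => dragonRel d u.val v.val)


lemma dragon_adj {d : ℕ} {u v : Fin (d+2)} :
    (dragon d).Adj u v ↔ u.val ≠ v.val ∧
      ((u.val ≤ d ∧ v.val ≤ d ∧ ¬(u.val = 0 ∧ v.val = d) ∧ ¬(u.val = d ∧ v.val = 0)) ∨
       (u.val = d+1 ∧ (v.val = 0 ∨ v.val = d)) ∨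
       (v.val = d+1 ∧ (u.val = 0 ∨ u.val = d))) := by
  rw [dragon, fromRel_adj, dragonRel, dragonRel, ← Fin.val_ne_iff]
  omega

def dcol (d : ℕ) (u v : Fin (d+2)) : Fin (d+1) :=
  if u.val = d+1 then (if v.val = 0 then ⟨0, by omega⟩ else ⟨d, by omega⟩)
  else if v.val = d+1 then (if u.val = 0 then ⟨0, by omega⟩ else ⟨d, by omega⟩)
  else ⟨(u.val + v.val) % (d+1), Nat.mod_lt _ (by omega)⟩

lemma dcol_symm (d : ℕ) (u v : Fin (d+2)) : dcol d u v = dcol d v u := by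
  unfold dcol
  split_ifs <;> first | rfl | (ext; simp; omega) | (exfalso; omega) | (ext; simp [Nat.add_comm])

lemma dcol_inj {d : ℕ} (hd : 3 ≤ d) {w a b : Fin (d+2)}
    (ha : (dragon d).Adj w a) (hb : (dragon d).Adj w b) (hab : a ≠ b) :
    dcol d w a ≠ dcol d w b := by
  rw [dragon_adj] at ha hb
  have hab' : a.val ≠ b.val := fun h => hab (Fin.ext h)
  intro h
  rw [Fin.ext_iff] at h
  unfold dcol at h
  by_cases hw : w.val = d+1
  · rw [if_pos hw, if_pos hw] at h
    have ha' : a.val = 0 ∨ a.val = d := by omega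
    have hb' : b.val = 0 ∨ b.val = d := by omega
    rcases ha' with h1 | h1 <;> rcases hb' with h2 | h2
    · omega
    · rw [if_pos h1, if_neg (by omega : ¬ b.val = 0)] at h
      have h' : (0 : ℕ) = d := h
      omega
    · rw [if_neg (by omega : ¬ a.val = 0), if_pos h2] at h
      have h' : (d : ℕ) = 0 := h
      omega
    · omega
  · rw [if_neg hw, if_neg hw] at h
    by_cases ha2 : a.val = d + 1
    · have hbne : b.val ≠ d + 1 := by omega
      rw [if_pos ha2, if_neg hbne] at h
      have hw0 : w.val = 0 ∨ w.val = d := by omega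
      rcases hw0 with hw0 | hw0
      · rw [if_pos hw0] at h
        have h' : (0:ℕ) = (w.val + b.val) % (d+1) := h
        have h2 : (w.val + b.val) % (d+1) = b.val := by
          rw [hw0, Nat.zero_add]; exact Nat.mod_eq_of_lt (by omega)
        omega
      · rw [if_neg (by omega : ¬ w.val = 0)] at h
        have h' : (d:ℕ) = (w.val + b.val) % (d+1) := h
        have hb0 : b.val ≠ 0 := by omega
        have h2 : (w.val + b.val) % (d+1) = b.val - 1 := by
          rw [show w.val + b.val = (b.val - 1) + (d+1) by omega, Nat.add_mod_right]
          exact Nat.mod_eq_of_lt (by omega)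
        omega
    · by_cases hb2 : b.val = d + 1
      · rw [if_neg ha2, if_pos hb2] at h
        have hw0 : w.val = 0 ∨ w.val = d := by omega
        rcases hw0 with hw0 | hw0
        · rw [if_pos hw0] at h
          have h' : (w.val + a.val) % (d+1) = 0 := h
          have h2 : (w.val + a.val) % (d+1) = a.val := by
            rw [hw0, Nat.zero_add]; exact Nat.mod_eq_of_lt (by omega)
          omega
        · rw [if_neg (by omega : ¬ w.val = 0)] at h
          have h' : (w.val + a.val) % (d+1) = d := h
          have ha0 : a.val ≠ 0 := by omega
          have h2 : (w.val + a.val) % (d+1) = a.val - 1 := by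
            rw [show w.val + a.val = (a.val - 1) + (d+1) by omega, Nat.add_mod_right]
            exact Nat.mod_eq_of_lt (by omega)
          omega
      · rw [if_neg ha2, if_neg hb2] at h
        have h1 : (w.val + a.val) % (d+1) = (w.val + b.val) % (d+1) := h
        have h2 : a.val % (d+1) = b.val % (d+1) := Nat.ModEq.add_left_cancel' w.val h1
        have h3 : a.val % (d+1) = a.val := Nat.mod_eq_of_lt (by omega)
        have h4 : b.val % (d+1) = b.val := Nat.mod_eq_of_lt (by omega)
        omega

def dragonColoring (d : ℕ) (hd : 3 ≤ d) : (dragon d).lineGraph.Coloring (Fin (d+1)) :=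
  SimpleGraph.Coloring.mk (fun e => Sym2.lift ⟨dcol d, dcol_symm d⟩ e.val) (by
    rintro ⟨e1, he1⟩ ⟨e2, he2⟩ hadj
    rw [lineGraph_adj_iff_exists] at hadj
    obtain ⟨hne, v, hv1, hv2⟩ := hadj
    simp only at hv1 hv2
    obtain ⟨a, rfl⟩ := Sym2.mem_iff_exists.mp hv1
    obtain ⟨b, rfl⟩ := Sym2.mem_iff_exists.mp hv2
    have ha : (dragon d).Adj v a := (SimpleGraph.mem_edgeSet _).mp he1
    have hb : (dragon d).Adj v b := (SimpleGraph.mem_edgeSet _).mp he2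
    have hab : a ≠ b := by
      intro h; exact hne (by simp [Subtype.ext_iff, h])
    simpa using dcol_inj hd ha hb hab)

lemma even_card_of_invol {α : Type*} [DecidableEq α] (s : Finset α) (f : α → α)
    (h1 : ∀ x ∈ s, f x ∈ s) (h2 : ∀ x ∈ s, f (f x) = x) (h3 : ∀ x ∈ s, f x ≠ x) :
    Even s.card := by
  classical
  induction s using Finset.strongInduction with
  | _ s ih =>
    rcases s.eq_empty_or_nonempty with rfl | ⟨x, hx⟩
    · simp
    · have hfx : f x ∈ s := h1 x hx
      have hfxx : f x ≠ x := h3 x hx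
      set t := (s.erase x).erase (f x) with ht
      have hts : t ⊂ s := by
        refine Finset.ssubset_of_subset_of_ssubset ?_ (Finset.erase_ssubset hx)
        exact Finset.erase_subset _ _
      have htmem : ∀ y, y ∈ t ↔ y ∈ s ∧ y ≠ x ∧ y ≠ f x := by
        intro y
        simp only [ht, Finset.mem_erase]
        tauto
      have h1' : ∀ y ∈ t, f y ∈ t := by
        intro y hy
        rw [htmem] at hy ⊢
        obtain ⟨hys, hyx, hyfx⟩ := hy
        refine ⟨h1 y hys, ?_, ?_⟩
        · intro h; apply hyfx
          have : f (f y) = f x := by rw [h]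
          rwa [h2 y hys] at this
        · intro h
          have := h2 y hys
          rw [h, h2 x hx] at this
          exact hyx this.symm
      have h2' : ∀ y ∈ t, f (f y) = y := fun y hy => h2 y ((htmem y).mp hy).1
      have h3' : ∀ y ∈ t, f y ≠ y := fun y hy => h3 y ((htmem y).mp hy).1
      have heven := ih t hts h1' h2' h3'
      have hcard : t.card = s.card - 2 := by
        rw [ht, Finset.card_erase_of_mem (Finset.mem_erase.mpr ⟨hfxx, hfx⟩),
          Finset.card_erase_of_mem hx]
        omega
      have h2le : 2 ≤ s.card := by
        have : ({x, f x} : Finset α) ⊆ s := by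
          intro y hy; simp at hy; rcases hy with rfl | rfl; exact hx; exact hfx
        calc 2 = ({x, f x} : Finset α).card := by rw [Finset.card_insert_of_notMem (by simpa using hfxx.symm), Finset.card_singleton]
        _ ≤ s.card := Finset.card_le_card this
      rw [hcard] at heven
      rcases heven with ⟨k, hk⟩
      exact ⟨k + 1, by omega⟩

lemma color_unique {d : ℕ} (C : (dragon d).lineGraph.Coloring (Fin d))
    {v a b : Fin (d+2)} (ha : (dragon d).Adj v a) (hb : (dragon d).Adj v b)
    (hc : C ⟨s(v,a), (SimpleGraph.mem_edgeSet _).mpr ha⟩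
        = C ⟨s(v,b), (SimpleGraph.mem_edgeSet _).mpr hb⟩) : a = b := by
  by_contra hab
  have hne : (⟨s(v,a), (SimpleGraph.mem_edgeSet _).mpr ha⟩ : (dragon d).edgeSet)
      ≠ ⟨s(v,b), (SimpleGraph.mem_edgeSet _).mpr hb⟩ := by
    intro h
    exact hab (Sym2.congr_right.mp (Subtype.ext_iff.mp h))
  have hadj : (dragon d).lineGraph.Adj _ _ :=
    (lineGraph_adj_iff_exists).mpr ⟨hne, v, by simp, by simp⟩
  exact C.valid hadj hc

lemma exists_color_edge {d : ℕ} (hd : 3 ≤ d) (C : (dragon d).lineGraph.Coloring (Fin d))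
    {v : Fin (d+2)} (hv : v.val ≤ d) (c : Fin d) :
    ∃ a, ∃ h : (dragon d).Adj v a, C ⟨s(v,a), (SimpleGraph.mem_edgeSet _).mpr h⟩ = c := by
  classical
  set N := Finset.univ.filter (fun a => (dragon d).Adj v a) with hNdef
  obtain ⟨p, hpv, hp⟩ : ∃ p : Fin (d+2), p ≠ v ∧ ∀ a, (dragon d).Adj v a ↔ (a ≠ v ∧ a ≠ p) := by
    by_cases h0 : v.val = 0
    · refine ⟨⟨d, by omega⟩, by rw [← Fin.val_ne_iff]; simp; omega, fun a => ?_⟩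
      rw [dragon_adj, ← Fin.val_ne_iff, ← Fin.val_ne_iff]
      simp only [Fin.val_mk]
      omega
    · by_cases h1 : v.val = d
      · refine ⟨⟨0, by omega⟩, by rw [← Fin.val_ne_iff]; simp; omega, fun a => ?_⟩
        rw [dragon_adj, ← Fin.val_ne_iff, ← Fin.val_ne_iff]
        simp only [Fin.val_mk]
        omega
      · refine ⟨⟨d+1, by omega⟩, by rw [← Fin.val_ne_iff]; simp; omega, fun a => ?_⟩
        rw [dragon_adj, ← Fin.val_ne_iff, ← Fin.val_ne_iff]
        simp only [Fin.val_mk]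
        omega
  have hN : N = (Finset.univ.erase p).erase v := by
    ext a
    simp only [hNdef, Finset.mem_filter, Finset.mem_erase, Finset.mem_univ, and_true, true_and, hp a]
    try tauto
  have hcard : N.card = d := by
    rw [hN, Finset.card_erase_of_mem (Finset.mem_erase.mpr ⟨Ne.symm hpv, Finset.mem_univ v⟩),
      Finset.card_erase_of_mem (Finset.mem_univ p), Finset.card_univ, Fintype.card_fin]
    omega
  have hmemN : ∀ a (_ : a ∈ N), (dragon d).Adj v a := by
    intro a ha'
    exact (Finset.mem_filter.mp ha').2
  have hsurj := Finset.surj_on_of_inj_on_of_card_le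
    (s := N) (t := (Finset.univ : Finset (Fin d)))
    (fun a ha => C ⟨s(v,a), (SimpleGraph.mem_edgeSet _).mpr (hmemN a ha)⟩)
    (fun a ha => Finset.mem_univ _)
    (fun a b ha hb hcc => color_unique C (hmemN a ha) (hmemN b hb) hcc)
    (by rw [hcard, Finset.card_univ, Fintype.card_fin])
  obtain ⟨a, ha, hc⟩ := hsurj c (Finset.mem_univ c)
  exact ⟨a, hmemN a ha, hc.symm⟩

lemma dragon_not_colorable {d : ℕ} (hd : 3 ≤ d) : ¬ (dragon d).lineGraph.Colorable d := by
  rintro ⟨C⟩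
  classical
  set L : Fin (d+2) := ⟨d+1, by omega⟩ with hL
  set Z : Fin (d+2) := ⟨0, by omega⟩ with hZ
  set Dv : Fin (d+2) := ⟨d, by omega⟩ with hDv
  have hLval : L.val = d + 1 := rfl
  have hZval : Z.val = 0 := rfl
  have hDval : Dv.val = d := rfl
  have hadjL0 : (dragon d).Adj L Z := by rw [dragon_adj, hLval, hZval]; omega
  have hadjLd : (dragon d).Adj L Dv := by rw [dragon_adj, hLval, hDval]; omega
  have hLnbr : ∀ a, (dragon d).Adj L a → a = Z ∨ a = Dv := by
    intro a ha
    rw [dragon_adj] at ha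
    rw [hLval] at ha
    have : a.val = 0 ∨ a.val = d := by omega
    rcases this with h | h
    · left; exact Fin.ext (by rw [h, hZval])
    · right; exact Fin.ext (by rw [h, hDval])
  set c0 := C ⟨s(L,Z), (SimpleGraph.mem_edgeSet _).mpr hadjL0⟩ with hc0
  set c1 := C ⟨s(L,Dv), (SimpleGraph.mem_edgeSet _).mpr hadjLd⟩ with hc1
  have hc01 : c0 ≠ c1 := by
    intro h
    have := color_unique C hadjL0 hadjLd h
    rw [Fin.ext_iff] at this
    rw [hZval, hDval] at this
    omega
  obtain ⟨c, hcpar⟩ : ∃ c : Fin d, ((c = c0 ∨ c = c1) ↔ d % 2 = 1) := by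
    by_cases hp : d % 2 = 1
    · exact ⟨c0, by simp [hp]⟩
    · have hex : ∃ c : Fin d, c ≠ c0 ∧ c ≠ c1 := by
        by_contra hno
        push_neg at hno
        have hsub : (Finset.univ : Finset (Fin d)) ⊆ {c0, c1} := by
          intro x _
          by_cases h : x = c0
          · simp [h]
          · simp [hno x h]
        have h2 := Finset.card_le_card hsub
        have h3 : ({c0,c1} : Finset (Fin d)).card ≤ 2 :=
          le_trans (Finset.card_insert_le _ _) (by simp)
        simp only [Finset.card_univ, Fintype.card_fin] at h2
        omega
      obtain ⟨c, h1, h2⟩ := hex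
      refine ⟨c, ⟨fun h => absurd (by tauto) (by tauto), fun h => absurd h hp⟩⟩
  set P : Fin (d+2) → Prop := fun v =>
    ∃ a, ∃ h : (dragon d).Adj v a, C ⟨s(v,a), (SimpleGraph.mem_edgeSet _).mpr h⟩ = c with hP
  set S := Finset.univ.filter P with hS
  set f : Fin (d+2) → Fin (d+2) := fun v => if h : P v then Classical.choose h else v with hf
  have hfspec : ∀ v, P v → ∃ h : (dragon d).Adj v (f v),
      C ⟨s(v, f v), (SimpleGraph.mem_edgeSet _).mpr h⟩ = c := by
    intro v hv
    simp only [hf, dif_pos hv]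
    exact Classical.choose_spec hv
  have hmemS : ∀ v, v ∈ S ↔ P v := by
    intro v; simp only [hS, Finset.mem_filter, Finset.mem_univ, true_and]
  have hPf : ∀ v, P v → P (f v) := by
    intro v hv
    obtain ⟨h, hcv⟩ := hfspec v hv
    refine ⟨v, h.symm, ?_⟩
    have he : (⟨s(f v, v), (SimpleGraph.mem_edgeSet _).mpr h.symm⟩ : (dragon d).edgeSet)
        = ⟨s(v, f v), (SimpleGraph.mem_edgeSet _).mpr h⟩ := Subtype.ext (Sym2.eq_swap)
    rw [he]
    exact hcv
  have hf1 : ∀ v ∈ S, f v ∈ S := by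
    intro v hv
    rw [hmemS] at hv ⊢
    exact hPf v hv
  have hf2 : ∀ v ∈ S, f (f v) = v := by
    intro v hv
    rw [hmemS] at hv
    obtain ⟨h, hcv⟩ := hfspec v hv
    obtain ⟨h2, hcv2⟩ := hfspec (f v) (hPf v hv)
    have hvv : C ⟨s(f v, v), (SimpleGraph.mem_edgeSet _).mpr h.symm⟩ = c := by
      have he : (⟨s(f v, v), (SimpleGraph.mem_edgeSet _).mpr h.symm⟩ : (dragon d).edgeSet)
          = ⟨s(v, f v), (SimpleGraph.mem_edgeSet _).mpr h⟩ := Subtype.ext (Sym2.eq_swap)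
      rw [he]; exact hcv
    exact color_unique C h2 h.symm (hcv2.trans hvv.symm)
  have hf3 : ∀ v ∈ S, f v ≠ v := by
    intro v hv hfv
    rw [hmemS] at hv
    obtain ⟨h, -⟩ := hfspec v hv
    rw [hfv] at h
    exact (dragon d).loopless.irrefl v h
  have heven := even_card_of_invol S f hf1 hf2 hf3
  have hsub1 : ∀ v : Fin (d+2), v.val ≤ d → v ∈ S := by
    intro v hv
    rw [hmemS]
    obtain ⟨a, h, hc⟩ := exists_color_edge hd C hv c
    exact ⟨a, h, hc⟩
  have hLS : L ∈ S ↔ (c = c0 ∨ c = c1) := by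
    constructor
    · intro h
      obtain ⟨a, ha, hca⟩ := (hmemS L).mp h
      rcases hLnbr a ha with rfl | rfl
      · left; exact hca.symm
      · right; exact hca.symm
    · intro h
      rw [hmemS]
      rcases h with rfl | rfl
      · exact ⟨Z, hadjL0, rfl⟩
      · exact ⟨Dv, hadjLd, rfl⟩
  by_cases hp : d % 2 = 1
  · have hSuniv : S = Finset.univ := by
      apply Finset.eq_univ_iff_forall.mpr
      intro v
      by_cases hv : v.val ≤ d
      · exact hsub1 v hv
      · have : v = L := Fin.ext (by rw [hLval]; omega)
        rw [this]
        exact hLS.mpr (hcpar.mpr hp)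
    rw [hSuniv] at heven
    simp only [Finset.card_univ, Fintype.card_fin] at heven
    rcases heven with ⟨k, hk⟩
    omega
  · have hLnot : L ∉ S := fun h => hp (hcpar.mp (hLS.mp h))
    have hSeq : S = Finset.univ.erase L := by
      ext v
      rw [Finset.mem_erase]
      constructor
      · intro h
        refine ⟨?_, Finset.mem_univ v⟩
        intro hveq
        rw [hveq] at h
        exact hLnot h
      · rintro ⟨hne, -⟩
        apply hsub1
        have : v.val ≠ d + 1 := by
          intro h
          exact hne (Fin.ext (by rw [hLval]; omega))
        omega
    rw [hSeq, Finset.card_erase_of_mem (Finset.mem_univ L), Finset.card_univ,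
      Fintype.card_fin] at heven
    rcases heven with ⟨k, hk⟩
    omega


/-- **Dragons are Vizing class 2.** For every `d ≥ 3` the chromatic index of the
`d`-dragon, i.e. the chromatic number of its line graph, equals `d + 1`. -/
theorem dragon_chromatic_index (d : ℕ) (hd : 3 ≤ d) :
    (dragon d).lineGraph.chromaticNumber = (d + 1 : ℕ) := by
  apply le_antisymm
  · exact SimpleGraph.Colorable.chromaticNumber_le ⟨dragonColoring d hd⟩
  · have h1 : ¬ ((dragon d).lineGraph.chromaticNumber ≤ (d : ℕ)) := fun h =>
      dragon_not_colorable hd (SimpleGraph.chromaticNumber_le_iff_colorable.mp h)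
    have h2 : ((d : ℕ) : ℕ∞) < (dragon d).lineGraph.chromaticNumber := lt_of_not_ge h1
    calc ((d + 1 : ℕ) : ℕ∞) = ((d : ℕ) : ℕ∞) + 1 := by push_cast; ring
    _ ≤ _ := Order.add_one_le_of_lt h2
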